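/- Under hypothesis (H1) and assuming that λ_u, λ_v, λ_b exist, for every S in the interval I one has H(S) > 0. -/

import Mathlib

/-- Under (H1) and existence of `lu, lv, lb`, for every `S` in
the interval `I` one has `H S > 0`. -/
theorem H_pos_on_I
    (f g : ℝ → ℝ) (D Sin a b yu yv Du Dv : ℝ)
    (hD : 0 < D) (hSin : 0 < Sin) (ha : 0 < a) (hb : 0 < b)
    (hyu : 0 < yu) (hyv : 0 < yv) (hDu : 0 < Du) (hDv : 0 < Dv)
    (hfC : ContDiffOn ℝ 1 f (Set.Ici 0)) (hgC : ContDiffOn ℝ 1 g (Set.Ici 0))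
    (hf0 : f 0 = 0) (hg0 : g 0 = 0)
    (hf' : ∀ S > (0:ℝ), 0 < deriv f S) (hg' : ∀ S > (0:ℝ), 0 < deriv g S)
    (phi psi U V H : ℝ → ℝ)
    (hphi : ∀ S, phi S = f S - Du) (hpsi : ∀ S, psi S = g S - Dv)
    (hU : ∀ S, U S = phi S * (psi S - b) / (a * (psi S - phi S)))
    (hV : ∀ S, V S = -((phi S)^2) * (psi S - b) / (a * (psi S - phi S) * psi S))
    (hH : ∀ S, H S = (1/yu) * f S * U S + (1/yv) * g S * V S)
    (lu lv lb : ℝ)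
    (hlu0 : 0 < lu) (hlu : f lu = Du)
    (hlv0 : 0 < lv) (hlv : g lv = Dv)
    (hlb0 : 0 < lb) (hlb : g lb = Dv + b) :
    ∀ S : ℝ, (if lu < lv then lu < S ∧ S < lv else lv < S ∧ S < min lu lb) →
      0 < H S := by
  have hfm : StrictMonoOn f (Set.Ici 0) := by
    apply strictMonoOn_of_deriv_pos (convex_Ici 0) hfC.continuousOn
    intro x hx
    rw [interior_Ici] at hx
    exact hf' x hx
  have hgm : StrictMonoOn g (Set.Ici 0) := by
    apply strictMonoOn_of_deriv_pos (convex_Ici 0) hgC.continuousOn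
    intro x hx
    rw [interior_Ici] at hx
    exact hg' x hx
  have hlvb : lv < lb := by
    by_contra h
    push_neg at h
    rcases eq_or_lt_of_le h with h' | h'
    · rw [← h'] at hlv; linarith
    · have := hgm hlb0.le hlv0.le h'
      rw [hlv, hlb] at this; linarith
  intro S hS
  by_cases hcase : lu < lv
  · rw [if_pos hcase] at hS
    obtain ⟨h1, h2⟩ := hS
    have hS0 : 0 < S := lt_trans hlu0 h1
    have hfS : Du < f S := by
      have := hfm hlu0.le hS0.le h1; rwa [hlu] at this
    have hgS0 : 0 < g S := by
      have := hgm (le_refl (0:ℝ)) hS0.le hS0; rwa [hg0] at this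
    have hgS : g S < Dv := by
      have := hgm hS0.le hlv0.le h2; rwa [hlv] at this
    have hgSb : g S < Dv + b := by linarith
    have hphiS : 0 < phi S := by rw [hphi]; linarith
    have hpsiS : psi S < 0 := by rw [hpsi]; linarith
    have hpsib : psi S - b < 0 := by rw [hpsi]; linarith
    have hdiff : psi S - phi S < 0 := by linarith
    have hUS : 0 < U S := by
      rw [hU]
      exact div_pos_of_neg_of_neg (mul_neg_of_pos_of_neg hphiS hpsib)
        (mul_neg_of_pos_of_neg ha hdiff)
    have hVS : 0 < V S := by
      rw [hV]
      apply div_pos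
      · have : 0 < phi S ^ 2 := pow_pos hphiS 2
        nlinarith
      · exact mul_pos_of_neg_of_neg (mul_neg_of_pos_of_neg ha hdiff) hpsiS
    rw [hH]
    have hfS0 : 0 < f S := lt_trans hDu hfS
    positivity
  · rw [if_neg hcase] at hS
    obtain ⟨h1, h2⟩ := hS
    have hS0 : 0 < S := lt_trans hlv0 h1
    have hSlu : S < lu := lt_of_lt_of_le h2 (min_le_left _ _)
    have hSlb : S < lb := lt_of_lt_of_le h2 (min_le_right _ _)
    have hfS0 : 0 < f S := by
      have := hfm (le_refl (0:ℝ)) hS0.le hS0; rwa [hf0] at this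
    have hfS : f S < Du := by
      have := hfm hS0.le hlu0.le hSlu; rwa [hlu] at this
    have hgS : Dv < g S := by
      have := hgm hlv0.le hS0.le h1; rwa [hlv] at this
    have hgSb : g S < Dv + b := by
      have := hgm hS0.le hlb0.le hSlb; rwa [hlb] at this
    have hphiS : phi S < 0 := by rw [hphi]; linarith
    have hpsiS : 0 < psi S := by rw [hpsi]; linarith
    have hpsib : psi S - b < 0 := by rw [hpsi]; linarith
    have hdiff : 0 < psi S - phi S := by linarith
    have hUS : 0 < U S := by
      rw [hU]
      exact div_pos (mul_pos_of_neg_of_neg hphiS hpsib) (mul_pos ha hdiff)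
    have hVS : 0 < V S := by
      rw [hV]
      apply div_pos
      · have hsq : 0 < phi S ^ 2 := by nlinarith
        nlinarith
      · exact mul_pos (mul_pos ha hdiff) hpsiS
    rw [hH]
    have hgS0 : 0 < g S := lt_trans hDv hgS
    positivity
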